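/- Let k ≥ 2, let f : (k+1)^V → ℝ be orthant submodular and pairwise monotone, let ε ≥ 0, and let f̂ : (k+1)^V → ℝ satisfy |f(x) − f̂(x)| ≤ ε for all x. Let s, z ∈ (k+1)^V with s ⪯ z, let e, o ∈ V with z(e) = 0 and z(o) = 0, and let i, i', h ∈ {1,…,k} with h ≠ i. If Δ_{e,i} f̂(s) ≥ Δ_{o,i'} f̂(s) and Δ_{e,i} f̂(s) ≥ Δ_{e,h} f̂(s), then 2·Δ_{e,i} f̂(s) ≥ Δ_{o,i'} f(z) − Δ_{e,i} f(z) − 4ε. -/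
import Mathlib


namespace Stmt16

variable {V : Type*}

/-- Marginal gain `Δ_{e,i} f(x) = f(x[e↦i]) − f(x)`. -/
def marg {k : ℕ} [DecidableEq V] (f : (V → Fin (k+1)) → ℝ)
    (x : V → Fin (k+1)) (e : V) (i : Fin (k+1)) : ℝ :=
  f (Function.update x e i) - f x

/-- `x ⪯ y` : `y` agrees with `x` on the support of `x`. -/
def preceq {k : ℕ} (x y : V → Fin (k+1)) : Prop :=
  ∀ e, x e ≠ 0 → y e = x e

def OrthantSubmodular {k : ℕ} [DecidableEq V] (f : (V → Fin (k+1)) → ℝ) : Prop :=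
  ∀ x y : V → Fin (k+1), preceq x y → ∀ e, y e = 0 → ∀ i : Fin (k+1), i ≠ 0 →
    marg f x e i ≥ marg f y e i

def PairwiseMonotone {k : ℕ} [DecidableEq V] (f : (V → Fin (k+1)) → ℝ) : Prop :=
  ∀ x : V → Fin (k+1), ∀ e, x e = 0 → ∀ i j : Fin (k+1), i ≠ 0 → j ≠ 0 → i ≠ j →
    marg f x e i + marg f x e j ≥ 0

/-- Per-iteration inequality in the robustness analysis of the greedy algorithm
for non-monotone `k`-submodular maximization under a matroid constraint:
if `Δ_{e,i} f̂(s) ≥ Δ_{o,i'} f̂(s)` and `Δ_{e,i} f̂(s) ≥ Δ_{e,h} f̂(s)` then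
`2·Δ_{e,i} f̂(s) ≥ Δ_{o,i'} f(z) − Δ_{e,i} f(z) − 4ε`. -/
theorem stmt16 {k : ℕ} (hk : 2 ≤ k) [Fintype V] [DecidableEq V]
    (f fh : (V → Fin (k+1)) → ℝ)
    (hos : OrthantSubmodular f) (hpm : PairwiseMonotone f)
    (ε : ℝ) (hε : 0 ≤ ε)
    (hclose : ∀ x, |f x - fh x| ≤ ε)
    (s z : V → Fin (k+1)) (hsz : preceq s z)
    (e o : V) (hze : z e = 0) (hzo : z o = 0)
    (i i' h : Fin (k+1)) (hi : i ≠ 0) (hi' : i' ≠ 0) (hh : h ≠ 0) (hhi : h ≠ i)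
    (hgr1 : marg fh s e i ≥ marg fh s o i')
    (hgr2 : marg fh s e i ≥ marg fh s e h) :
    2 * marg fh s e i ≥ marg f z o i' - marg f z e i - 4 * ε := by
  have key : ∀ (x : V → Fin (k+1)) (a : V) (j : Fin (k+1)),
      marg fh x a j ≥ marg f x a j - 2 * ε := by
    intro x a j
    have h1 := abs_le.mp (hclose (Function.update x a j))
    have h2 := abs_le.mp (hclose x)
    unfold marg
    linarith [h1.1, h1.2, h2.1, h2.2]
  -- first bound
  have b1 : marg fh s e i ≥ marg f z o i' - 2 * ε := by
    have := hos s z hsz o hzo i' hi'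
    have := key s o i'
    linarith
  -- second bound
  have b2 : marg fh s e i ≥ - marg f z e i - 2 * ε := by
    have hpz := hpm z e hze i h hi hh (Ne.symm hhi)
    have hsub := hos s z hsz e hze h hh
    have := key s e h
    linarith
  linarith

end Stmt16
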